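/- For any nonnegative integers n ≥ 1 and k, the identity S(n, k) · ∏_{i=1}^{n}(1 − 2^{−i}) = ∏_{i=k+1}^{n+k}(1 − 2^{−i}) holds, where S(ω,l) = Σ_{0 ≤ i₁ ≤ ⋯ ≤ i_l ≤ ω} 2^{-(i₁+⋯+i_l)}. -/

import Mathlib

/-- `S ω l` = sum over all nondecreasing tuples `0 ≤ i₁ ≤ ⋯ ≤ i_l ≤ ω`
of `2^{-(i₁+⋯+i_l)}`, with `S ω 0 = 1`. -/
noncomputable def S (ω l : ℕ) : ℝ := by
  classical
  exact ∑ f ∈ Finset.univ.filter (fun f : Fin l → Fin (ω + 1) => Monotone f),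
    (1 / 2 : ℝ) ^ (∑ i, (f i : ℕ))

lemma S_zero_right (ω : ℕ) : S ω 0 = 1 := by
  classical
  rw [S]
  rw [Finset.filter_true_of_mem (fun f _ => (by intro a b h; exact a.elim0 : Monotone f))]
  simp

lemma S_zero_left (l : ℕ) : S 0 l = 1 := by
  classical
  rw [S]
  have hmono : ∀ f : Fin l → Fin 1, Monotone f := fun f => by
    intro a b _; exact le_of_eq (Subsingleton.elim _ _)
  rw [Finset.filter_true_of_mem (fun f _ => hmono f)]
  have hsum : ∀ f : Fin l → Fin 1, (∑ i, ((f i : ℕ))) = 0 := fun f =>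
    Finset.sum_eq_zero (fun i _ => by omega)
  have : (Finset.univ : Finset (Fin l → Fin 1)).card = 1 := by
    simp [Finset.card_univ]
  rw [Finset.sum_congr rfl (fun f _ => by rw [hsum f, pow_zero])]
  rw [Finset.sum_const, this]
  simp

lemma S_succ (ω l : ℕ) :
    S ω (l + 1) = ∑ j ∈ Finset.range (ω + 1), (1 / 2 : ℝ) ^ j * S j l := by
  classical
  rw [Finset.sum_range (fun j => (1 / 2 : ℝ) ^ j * S j l)]
  rw [S, ← Finset.sum_fiberwise _ (fun f : Fin (l + 1) → Fin (ω + 1) => f (Fin.last l))]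
  refine Finset.sum_congr rfl fun j _ => ?_
  rw [S, Finset.mul_sum]
  refine Finset.sum_nbij'
    (i := fun f => fun i : Fin l =>
      (⟨min ((f i.castSucc : ℕ)) (j : ℕ),
        lt_of_le_of_lt (min_le_right _ _) (Nat.lt_succ_self _)⟩ : Fin ((j : ℕ) + 1)))
    (j := fun g => Fin.snoc (fun i => Fin.castLE (by omega) (g i)) j)
    ?_ ?_ ?_ ?_ ?_
  · -- maps to
    intro f hf
    simp only [Finset.mem_filter, Finset.mem_univ, true_and] at hf ⊢
    obtain ⟨hmono, hlast⟩ := hf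
    intro a b hab
    have : f a.castSucc ≤ f b.castSucc := hmono (by simpa using hab)
    simp only [Fin.mk_le_mk]
    omega
  · -- maps from
    intro g hg
    simp only [Finset.mem_filter, Finset.mem_univ, true_and] at hg ⊢
    constructor
    · intro a b hab
      induction b using Fin.lastCases with
      | last =>
        induction a using Fin.lastCases with
        | last => exact le_rfl
        | cast a' =>
          rw [Fin.snoc_castSucc, Fin.snoc_last]
          simp only [Fin.le_def, Fin.coe_castLE]
          omega
      | cast b' =>
        induction a using Fin.lastCases with
        | last => exact ((Fin.castSucc_lt_last b').not_ge hab).elim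
        | cast a' =>
          rw [Fin.snoc_castSucc, Fin.snoc_castSucc]
          simp only [Fin.le_def, Fin.coe_castLE]
          have := hg (show a' ≤ b' by
            simpa [Fin.castSucc_le_castSucc_iff] using hab)
          exact this
    · exact Fin.snoc_last _ _
  · -- left inverse
    intro f hf
    simp only [Finset.mem_filter, Finset.mem_univ, true_and] at hf
    obtain ⟨hmono, hlast⟩ := hf
    funext x
    induction x using Fin.lastCases with
    | last => simpa [Fin.snoc_last] using hlast.symm
    | cast i =>
      simp only [Fin.snoc_castSucc]
      apply Fin.ext
      simp only [Fin.coe_castLE]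
      have : f i.castSucc ≤ f (Fin.last l) := hmono (Fin.le_last _)
      rw [hlast] at this
      simp only [Fin.le_def] at this
      omega
  · -- right inverse
    intro g hg
    funext i
    simp only [Fin.snoc_castSucc]
    apply Fin.ext
    simp only [Fin.coe_castLE]
    have : (g i : ℕ) ≤ (j : ℕ) := by omega
    omega
  · -- sums agree
    intro f hf
    simp only [Finset.mem_filter, Finset.mem_univ, true_and] at hf
    obtain ⟨hmono, hlast⟩ := hf
    rw [← pow_add]
    congr 1
    rw [Fin.sum_univ_castSucc, hlast]
    have : ∀ i : Fin l, min ((f i.castSucc : ℕ)) (j : ℕ) = (f i.castSucc : ℕ) := by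
      intro i
      have : f i.castSucc ≤ f (Fin.last l) := hmono (Fin.le_last _)
      rw [hlast] at this
      simp only [Fin.le_def] at this
      omega
    rw [Finset.sum_congr rfl (fun i _ => this i)]
    ring

lemma S_rec (n k : ℕ) :
    S (n + 1) (k + 1) = S n (k + 1) + (1 / 2 : ℝ) ^ (n + 1) * S (n + 1) k := by
  rw [S_succ, S_succ, Finset.sum_range_succ]

lemma key (k n : ℕ) :
    S n k * ∏ i ∈ Finset.Icc 1 n, (1 - (1 / 2 : ℝ) ^ i)
      = ∏ i ∈ Finset.Icc (k + 1) (n + k), (1 - (1 / 2 : ℝ) ^ i) := by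
  induction k generalizing n with
  | zero =>
    rw [S_zero_right, one_mul]
    norm_num
  | succ k ihk =>
    induction n with
    | zero =>
      rw [S_zero_left, one_mul]
      rw [Finset.Icc_eq_empty (by omega), Finset.Icc_eq_empty (by omega)]
    | succ n ihn =>
      have hA : ∏ i ∈ Finset.Icc 1 (n + 1), (1 - (1 / 2 : ℝ) ^ i)
          = (∏ i ∈ Finset.Icc 1 n, (1 - (1 / 2 : ℝ) ^ i)) * (1 - (1 / 2 : ℝ) ^ (n + 1)) :=
        Finset.prod_Icc_succ_top (by omega) _
      have hsplit : Finset.Icc (k + 1) (n + 1 + k) = insert (k + 1) (Finset.Icc (k + 2) (n + 1 + k)) := by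
        ext x; simp [Finset.mem_Icc]; omega
      have hP2 : ∏ i ∈ Finset.Icc (k + 1) (n + 1 + k), (1 - (1 / 2 : ℝ) ^ i)
          = (1 - (1 / 2 : ℝ) ^ (k + 1)) * ∏ i ∈ Finset.Icc (k + 2) (n + 1 + k), (1 - (1 / 2 : ℝ) ^ i) := by
        rw [hsplit, Finset.prod_insert (by simp [Finset.mem_Icc])]
      have hRHS : ∏ i ∈ Finset.Icc (k + 1 + 1) (n + 1 + (k + 1)), (1 - (1 / 2 : ℝ) ^ i)
          = (∏ i ∈ Finset.Icc (k + 2) (n + 1 + k), (1 - (1 / 2 : ℝ) ^ i))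
            * (1 - (1 / 2 : ℝ) ^ (n + 1 + k + 1)) := by
        rw [show n + 1 + (k + 1) = (n + 1 + k) + 1 by ring]
        exact Finset.prod_Icc_succ_top (by omega) _
      rw [show k + 1 + 1 = k + 2 by omega, show n + (k + 1) = n + 1 + k by omega] at ihn
      rw [show k + 1 + 1 = k + 2 by omega] at hRHS
      specialize ihk (n + 1)
      rw [S_rec, hRHS]
      linear_combination (S n (k + 1)) * hA + (1 - (1 / 2 : ℝ) ^ (n + 1)) * ihn
        + (1 / 2 : ℝ) ^ (n + 1) * ihk + (1 / 2 : ℝ) ^ (n + 1) * hP2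

theorem stmt_10 (n k : ℕ) (hn : 1 ≤ n) :
    S n k * ∏ i ∈ Finset.Icc 1 n, (1 - (1 / 2 : ℝ) ^ i)
      = ∏ i ∈ Finset.Icc (k + 1) (n + k), (1 - (1 / 2 : ℝ) ^ i) := by
  exact key k n
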